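/- Every weak contact semilattice satisfying (D1) and (D2) can be embedded into a Boolean algebra with the overlap contact relation, via the map sending a to the down-complement set {x ∈ S : a ≰ x}, composed with the quotient by the ideal generated by the sets φ(c) ∩ φ(d) for non-contact pairs c, d. -/

import Mathlib

universe u

/-- The quotient of a Boolean ring by an ideal is a Boolean ring. -/
instance Ideal.Quotient.booleanRing {R : Type*} [BooleanRing R] (I : Ideal R) :
    BooleanRing (R ⧸ I) :=
  { (inferInstance : Ring (R ⧸ I)) with
    isIdempotentElem := fun a => by
      obtain ⟨x, rfl⟩ := Ideal.Quotient.mk_surjective a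
      show _ * _ = _
      rw [← (Ideal.Quotient.mk I).map_mul, show x * x = x from BooleanRing.isIdempotentElem x] }

/-- Auxiliary induction using (D1): if `a ≤ x` for every `x ≥ b` that lies above one
component of each pair in `L`, then `a ≤ b`. -/
theorem auxD1 {S : Type u} [SemilatticeSup S] [OrderBot S] (δ : S → S → Prop)
    (hD1 : ∀ a b c₀ c₁ : S, b ≤ a ⊔ c₀ → b ≤ a ⊔ c₁ → ¬ δ c₀ c₁ → b ≤ a) :
    ∀ (L : List (S × S)) (a b : S),
      (∀ p ∈ L, ¬ δ p.1 p.2) →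
      (∀ x : S, b ≤ x → (∀ p ∈ L, p.1 ≤ x ∨ p.2 ≤ x) → a ≤ x) → a ≤ b := by
  intro L
  induction L with
  | nil =>
    intro a b _ h
    exact h b le_rfl (by simp)
  | cons q L ih =>
    intro a b hL h
    have h1 : a ≤ b ⊔ q.1 := by
      apply ih a (b ⊔ q.1) (fun p hp => hL p (List.mem_cons_of_mem _ hp))
      intro x hx hx2
      apply h x (le_trans le_sup_left hx)
      intro p hp
      rcases List.mem_cons.1 hp with rfl | hp
      · exact Or.inl (le_trans le_sup_right hx)
      · exact hx2 p hp
    have h2 : a ≤ b ⊔ q.2 := by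
      apply ih a (b ⊔ q.2) (fun p hp => hL p (List.mem_cons_of_mem _ hp))
      intro x hx hx2
      apply h x (le_trans le_sup_left hx)
      intro p hp
      rcases List.mem_cons.1 hp with rfl | hp
      · exact Or.inr (le_trans le_sup_right hx)
      · exact hx2 p hp
    exact hD1 b a q.1 q.2 h1 h2 (hL q (List.mem_cons_self))

/-- Every weak contact semilattice `S` satisfying (D1) and (D2) embeds into
a Boolean algebra with the overlap contact relation, via `a ↦ φ(a) = {x ∈ S : a ≰ x}`
composed with the quotient of the Boolean algebra `𝒫(S)` by the ideal generated by the
sets `φ(c) ∩ φ(d)` for pairs `c, d` that are not in contact. -/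
theorem embedding_via_downcomplement {S : Type u} [SemilatticeSup S] [OrderBot S]
    (δ : S → S → Prop)
    (hSym : ∀ a b : S, δ a b → δ b a)
    (hEmp : ∀ a b : S, δ a b → ⊥ < a ∧ ⊥ < b)
    (hExt : ∀ a b a₁ b₁ : S, δ a b → a ≤ a₁ → b ≤ b₁ → δ a₁ b₁)
    (hRef : ∀ n : S, n ≠ ⊥ → δ n n)
    (hD1 : ∀ a b c₀ c₁ : S, b ≤ a ⊔ c₀ → b ≤ a ⊔ c₁ → ¬ δ c₀ c₁ → b ≤ a)
    (hD2 : ∀ (n : ℕ) (a b : S) (c : Fin n → Fin 2 → S),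
      (∀ i, ¬ δ (c i 0) (c i 1)) →
      (∀ f : Fin n → Fin 2,
        b ≤ Finset.univ.sup (fun i => c i (f i)) ∨
        a ≤ Finset.univ.sup (fun i => c i (f i))) →
      ¬ δ b a) :
    let φ : S → Set S := fun a => {x : S | ¬ a ≤ x}
    let I : Ideal (AsBoolRing (Set S)) :=
      Ideal.span {z : AsBoolRing (Set S) |
        ∃ c d : S, ¬ δ c d ∧ z = toBoolRing (φ c ∩ φ d)}
    let κ : S → AsBoolAlg (AsBoolRing (Set S) ⧸ I) :=
      fun a => toBoolAlg (Ideal.Quotient.mk I (toBoolRing (φ a)))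
    Function.Injective κ ∧ κ ⊥ = ⊥ ∧
    (∀ a b : S, κ (a ⊔ b) = κ a ⊔ κ b) ∧
    (∀ a b : S, δ a b ↔ κ a ⊓ κ b ≠ ⊥) := by
  intro φ I κ
  -- every element of I is covered by finitely many generators
  have hmem : ∀ x : AsBoolRing (Set S), x ∈ I →
      ∃ L : List (S × S), (∀ p ∈ L, ¬ δ p.1 p.2) ∧
        (ofBoolRing x : Set S) ⊆ ⋃ p ∈ L, (φ p.1 ∩ φ p.2) := by
    intro x hx
    refine Submodule.span_induction ?_ ?_ ?_ ?_ hx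
    · rintro z ⟨c, d, hcd, rfl⟩
      refine ⟨[(c, d)], by simpa using hcd, ?_⟩
      rw [ofBoolRing_toBoolRing]
      intro t ht
      exact Set.mem_iUnion₂.2 ⟨(c, d), List.mem_singleton_self _, ht⟩
    · refine ⟨[], by simp, ?_⟩
      rw [ofBoolRing_zero]
      exact bot_le
    · rintro y z hy hz ⟨L₁, h₁, s₁⟩ ⟨L₂, h₂, s₂⟩
      refine ⟨L₁ ++ L₂, ?_, ?_⟩
      · intro p hp
        rcases List.mem_append.1 hp with hp | hp
        · exact h₁ p hp
        · exact h₂ p hp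
      · intro t ht
        rw [ofBoolRing_add] at ht
        rcases Set.mem_symmDiff.1 ht with ⟨h1, _⟩ | ⟨h1, _⟩
        · obtain ⟨p, hp, hm⟩ := Set.mem_iUnion₂.1 (s₁ h1)
          exact Set.mem_iUnion₂.2 ⟨p, List.mem_append_left _ hp, hm⟩
        · obtain ⟨p, hp, hm⟩ := Set.mem_iUnion₂.1 (s₂ h1)
          exact Set.mem_iUnion₂.2 ⟨p, List.mem_append_right _ hp, hm⟩
    · rintro r y hy ⟨L, hL, sL⟩
      refine ⟨L, hL, ?_⟩
      rw [smul_eq_mul, ofBoolRing_mul]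
      exact fun t ht => sL ht.2
  -- the key (D1)-based consequence of a covering of φ a \ φ b
  have key : ∀ (a b : S) (L : List (S × S)), (∀ p ∈ L, ¬ δ p.1 p.2) →
      (φ a \ φ b ⊆ ⋃ p ∈ L, (φ p.1 ∩ φ p.2)) → a ≤ b := by
    intro a b L hL hsub
    apply auxD1 δ hD1 L a b hL
    intro x hbx hx
    by_contra hax
    have hxmem : x ∈ φ a \ φ b := ⟨hax, fun h => h hbx⟩
    obtain ⟨p, hp, hm⟩ := Set.mem_iUnion₂.1 (hsub hxmem)
    rcases hx p hp with h | h
    · exact hm.1 h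
    · exact hm.2 h
  refine ⟨?_, ?_, ?_, ?_⟩
  · -- injectivity
    intro a b hab
    have h1 : Ideal.Quotient.mk I (toBoolRing (φ a)) = Ideal.Quotient.mk I (toBoolRing (φ b)) :=
      toBoolAlg_inj.1 hab
    have h2 : toBoolRing (φ a) - toBoolRing (φ b) ∈ I := Ideal.Quotient.eq.1 h1
    obtain ⟨L, hL, hsub⟩ := hmem _ h2
    rw [ofBoolRing_sub, ofBoolRing_toBoolRing, ofBoolRing_toBoolRing] at hsub
    have hab1 : a ≤ b := key a b L hL (fun t ht => hsub (Set.mem_symmDiff.2 (Or.inl ⟨ht.1, ht.2⟩)))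
    have hab2 : b ≤ a := key b a L hL (fun t ht => hsub (Set.mem_symmDiff.2 (Or.inr ⟨ht.1, ht.2⟩)))
    exact le_antisymm hab1 hab2
  · -- κ ⊥ = ⊥
    have hphi : φ ⊥ = (⊥ : Set S) := by
      ext x; simp [φ]
    show toBoolAlg (Ideal.Quotient.mk I (toBoolRing (φ ⊥))) = ⊥
    rw [hphi, toBoolRing_bot, map_zero, toBoolAlg_zero]
  · -- κ preserves sup
    intro a b
    have hphi : φ (a ⊔ b) = φ a ⊔ φ b := by
      ext x; simp [φ, sup_le_iff]; tauto
    have hR : toBoolRing (φ a ⊔ φ b) =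
        toBoolRing (φ a) + toBoolRing (φ b) + toBoolRing (φ a) * toBoolRing (φ b) := by
      apply (ofBoolRing (α := Set S)).injective
      rw [ofBoolRing_toBoolRing, ofBoolRing_add, ofBoolRing_add, ofBoolRing_mul,
        ofBoolRing_toBoolRing, ofBoolRing_toBoolRing]
      ext x
      simp [Set.mem_symmDiff]
      tauto
    show toBoolAlg (Ideal.Quotient.mk I (toBoolRing (φ (a ⊔ b)))) = _
    rw [hphi, hR, (Ideal.Quotient.mk I).map_add, (Ideal.Quotient.mk I).map_add,
      (Ideal.Quotient.mk I).map_mul, toBoolAlg_add_add_mul]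
  · -- contact correspondence
    intro a b
    have hmeet : κ a ⊓ κ b = toBoolAlg (Ideal.Quotient.mk I (toBoolRing (φ a ∩ φ b))) := by
      show toBoolAlg _ ⊓ toBoolAlg _ = _
      rw [← toBoolAlg_mul, ← map_mul, ← toBoolRing_inf]
      rfl
    constructor
    · intro hab hbot
      rw [hmeet] at hbot
      have h0 : Ideal.Quotient.mk I (toBoolRing (φ a ∩ φ b)) = 0 := by
        have := hbot
        rw [show (⊥ : AsBoolAlg (AsBoolRing (Set S) ⧸ I)) = toBoolAlg 0 from (toBoolAlg_zero).symm,
          toBoolAlg_inj] at this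
        exact this
      have hIn : toBoolRing (φ a ∩ φ b) ∈ I := (Ideal.Quotient.eq_zero_iff_mem).1 h0
      obtain ⟨L, hL, hsub⟩ := hmem _ hIn
      rw [ofBoolRing_toBoolRing] at hsub
      -- apply D2
      set n := L.length with hn
      set c : Fin n → Fin 2 → S := fun i j => if j = 0 then (L.get i).1 else (L.get i).2 with hc
      have hpairs : ∀ i, ¬ δ (c i 0) (c i 1) := by
        intro i
        simp only [hc, if_pos rfl, if_neg (by decide : (1 : Fin 2) ≠ 0)]
        exact hL (L.get i) (List.get_mem L i)
      have hchoice : ∀ f : Fin n → Fin 2,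
          b ≤ Finset.univ.sup (fun i => c i (f i)) ∨
          a ≤ Finset.univ.sup (fun i => c i (f i)) := by
        intro f
        set x := Finset.univ.sup (fun i => c i (f i)) with hx
        have hcov : ∀ p ∈ L, p.1 ≤ x ∨ p.2 ≤ x := by
          intro p hp
          obtain ⟨i, hi⟩ := List.mem_iff_get.1 hp
          have hle : c i (f i) ≤ x := Finset.le_sup (f := fun i => c i (f i)) (Finset.mem_univ i)
          have h2 : f i = 0 ∨ f i = 1 := by omega
          have e0 : c i 0 = p.1 := by simp only [hc]; rw [hi]; simp
          have e1 : c i 1 = p.2 := by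
            simp only [hc]; rw [hi]
            exact if_neg (by decide)
          rcases h2 with h2 | h2
          · left; rw [h2, e0] at hle; exact hle
          · right; rw [h2, e1] at hle; exact hle
        by_contra hcon
        push_neg at hcon
        have hxmem : x ∈ φ a ∩ φ b := ⟨hcon.2, hcon.1⟩
        obtain ⟨p, hp, hm⟩ := Set.mem_iUnion₂.1 (hsub hxmem)
        rcases hcov p hp with h | h
        · exact hm.1 h
        · exact hm.2 h
      exact hD2 n a b c hpairs hchoice (hSym a b hab)
    · intro hne
      by_contra hab
      apply hne
      rw [hmeet]
      have hIn : toBoolRing (φ a ∩ φ b) ∈ I :=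
        Ideal.subset_span ⟨a, b, hab, rfl⟩
      rw [(Ideal.Quotient.eq_zero_iff_mem).2 hIn, toBoolAlg_zero]
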